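/- For every bay configuration B with C columns and h containers per column, if B contains at least one 'special' column (all of whose containers have labels at least omega = (h-1)(C+1)+1, in a bay with C+1 columns from which this column and B are taken), then z_opt(B_{C+1}) <= z_opt(B_C) + S_0(col), where B_{C+1} is B_C augmented with the special column col and S_0(col) counts blocking containers within col. -/

import Mathlib

abbrev Bay (C : ℕ) := Fin C → List ℕ

def S0col : List ℕ → ℕ
  | [] => 0
  | a :: rest => (if rest.any (fun b => decide (b < a)) then 1 else 0) + S0col rest

def S0 {C : ℕ} (B : Bay C) : ℕ := ∑ i : Fin C, S0col (B i)

def bayMem {C : ℕ} (x : ℕ) (B : Bay C) : Prop := ∃ i, x ∈ B i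

def totalCount {C : ℕ} (B : Bay C) : ℕ := ∑ i : Fin C, (B i).length

def WellFormed {C : ℕ} (P : ℕ) (B : Bay C) : Prop :=
  (∀ i, (B i).length ≤ P) ∧ ((List.finRange C).flatMap B).Nodup

def MM {C : ℕ} (B : Bay C) : ℕ := Finset.univ.sup (fun i : Fin C => ((B i).min?).getD 0)

def blockersAux (k : ℕ) : List ℕ → List ℕ
  | [] => []
  | a :: rest => (if rest.min? = some k then [a] else []) ++ blockersAux k rest

def Rk {C : ℕ} (k : ℕ) (B : Bay C) : List ℕ :=
  (List.finRange C).flatMap (fun i => blockersAux k (B i))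

def discard {C : ℕ} (s : List ℕ) (B : Bay C) : Bay C :=
  fun i => (B i).filter (fun x => decide (x ∉ s))

def Dk {C : ℕ} (B : Bay C) (n1 : ℕ) : ℕ → Bay C
  | 0 => B
  | m+1 => discard ((n1+m) :: Rk (n1+m) B) (Dk B n1 m)

def Sp {C : ℕ} (B : Bay C) (n1 N p : ℕ) : ℕ :=
  S0 B + ∑ k ∈ Finset.Icc n1 (min (p + n1 - 1) N),
    ((Rk k B).filter (fun r => decide (MM (Dk B n1 (k - n1)) < r))).length

def RelocStep {C : ℕ} (P : ℕ) (B B' : Bay C) : Prop :=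
  ∃ (c i : Fin C) (r t : ℕ) (rest : List ℕ),
    i ≠ c ∧ B c = r :: rest ∧ t ∈ rest ∧ (∀ x, bayMem x B → t ≤ x) ∧ t < r ∧
    (B i).length < P ∧
    B' = fun j => if j = c then rest else if j = i then r :: B j else B j

inductive Steps {C : ℕ} (P : ℕ) : Bay C → ℕ → Prop
  | empty : ∀ B : Bay C, (∀ i, B i = []) → Steps P B 0
  | retrieve : ∀ (B : Bay C) (c : Fin C) (t : ℕ) (rest : List ℕ) (n : ℕ),
      B c = t :: rest → (∀ x, bayMem x B → t ≤ x) →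
      Steps P (Function.update B c rest) n → Steps P B n
  | relocate : ∀ (B B' : Bay C) (n : ℕ), RelocStep P B B' → Steps P B' n → Steps P B (n+1)

def IsOptimal {C : ℕ} (P : ℕ) (B : Bay C) (n : ℕ) : Prop :=
  Steps P B n ∧ ∀ m, Steps P B m → n ≤ m

def cmin (N : ℕ) (l : List ℕ) : ℕ := (l.min?).getD (N+1)

inductive HRun {C : ℕ} (P N : ℕ) : Bay C → ℕ → Prop
  | empty : ∀ B : Bay C, (∀ i, B i = []) → HRun P N B 0
  | retrieve : ∀ (B : Bay C) (c : Fin C) (t : ℕ) (rest : List ℕ) (n : ℕ),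
      B c = t :: rest → (∀ x, bayMem x B → t ≤ x) →
      HRun P N (Function.update B c rest) n → HRun P N B n
  | relocate : ∀ (B : Bay C) (c i : Fin C) (r t : ℕ) (rest : List ℕ) (n : ℕ),
      i ≠ c → B c = r :: rest → t ∈ rest → (∀ x, bayMem x B → t ≤ x) → t < r →
      (B i).length < P →
      ((r < cmin N (B i) ∧ ∀ j : Fin C, j ≠ c → r < cmin N (B j) → cmin N (B i) ≤ cmin N (B j)) ∨
       ((∀ j : Fin C, j ≠ c → ¬ r < cmin N (B j)) ∧ ∀ j : Fin C, j ≠ c → cmin N (B j) ≤ cmin N (B i))) →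
      HRun P N (fun j => if j = c then rest else if j = i then r :: B j else B j) n →
      HRun P N B (n+1)

def MB {C : ℕ} (B : Bay C) : Multiset ℕ := ∑ i : Fin C, (B i : Multiset ℕ)

lemma mem_MB {C : ℕ} {x : ℕ} {B : Bay C} : x ∈ MB B ↔ bayMem x B := by
  simp [MB, bayMem, Multiset.mem_sum]

lemma sum_update_apply {C : ℕ} {M : Type*} [AddCommMonoid M] (g : List ℕ → M)
    (B : Bay C) (c : Fin C) (l : List ℕ) :
    (∑ i, g (Function.update B c l i)) + g (B c) = (∑ i, g (B i)) + g l := by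
  have h1 : (∑ i, g (Function.update B c l i))
      = ∑ i, Function.update (fun i => g (B i)) c (g l) i := by
    refine Finset.sum_congr rfl fun i _ => ?_
    exact Function.apply_update (fun _ x => g x) B c l i
  rw [h1, Finset.sum_update_of_mem (Finset.mem_univ c),
    ← Finset.add_sum_erase Finset.univ (fun i => g (B i)) (Finset.mem_univ c),
    Finset.erase_eq]
  abel

lemma MB_update_add {C : ℕ} (B : Bay C) (c : Fin C) (l : List ℕ) :
    MB (Function.update B c l) + (B c : Multiset ℕ) = MB B + (l : Multiset ℕ) :=
  sum_update_apply (fun l => (l : Multiset ℕ)) B c l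

lemma S0_update_add {C : ℕ} (B : Bay C) (c : Fin C) (l : List ℕ) :
    S0 (Function.update B c l) + S0col (B c) = S0 B + S0col l :=
  sum_update_apply S0col B c l

lemma MB_retrieve {C : ℕ} {B : Bay C} {c : Fin C} {t : ℕ} {rest : List ℕ}
    (hbc : B c = t :: rest) :
    MB B = t ::ₘ MB (Function.update B c rest) := by
  have h := MB_update_add B c rest
  rw [hbc] at h
  have h2 : ((t :: rest : List ℕ) : Multiset ℕ) = t ::ₘ (rest : Multiset ℕ) := rfl
  rw [h2] at h
  have h3 : MB (Function.update B c rest) + (t ::ₘ (rest : Multiset ℕ))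
      = (t ::ₘ MB (Function.update B c rest)) + (rest : Multiset ℕ) := by
    rw [Multiset.add_cons, Multiset.cons_add]
  rw [h3] at h
  exact (add_right_cancel h).symm

def RelocStep' {C : ℕ} (B : Bay C) (c i : Fin C) (r : ℕ) (rest : List ℕ) : Bay C :=
  fun j => if j = c then rest else if j = i then r :: B j else B j

lemma reloc_eq_update {C : ℕ} (B : Bay C) {c i : Fin C} (hic : i ≠ c) (r : ℕ) (rest : List ℕ) :
    RelocStep' B c i r rest
      = Function.update (Function.update B c rest) i (r :: B i) := by
  funext j
  by_cases hjc : j = c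
  · subst hjc
    rw [Function.update_of_ne (Ne.symm hic), Function.update_self]
    simp [RelocStep']
  · by_cases hji : j = i
    · subst hji
      rw [Function.update_self]
      simp [RelocStep', hjc]
    · rw [Function.update_of_ne hji, Function.update_of_ne hjc]
      simp [RelocStep', hjc, hji]

lemma MB_reloc {C : ℕ} (B : Bay C) {c i : Fin C} (hic : i ≠ c) {r : ℕ} {rest : List ℕ}
    (hbc : B c = r :: rest) :
    MB (RelocStep' B c i r rest) = MB B := by
  rw [reloc_eq_update B hic]
  set X := Function.update B c rest with hX
  have h1 : MB (Function.update X i (r :: X i)) + (X i : Multiset ℕ)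
      = MB X + ((r :: X i : List ℕ) : Multiset ℕ) := MB_update_add X i (r :: X i)
  have h2 : MB X + (B c : Multiset ℕ) = MB B + (rest : Multiset ℕ) := MB_update_add B c rest
  have hXi : X i = B i := Function.update_of_ne hic rest B
  rw [hbc] at h2
  have hcons : ((r :: rest : List ℕ) : Multiset ℕ) = r ::ₘ (rest : Multiset ℕ) := rfl
  have hcons2 : ((r :: X i : List ℕ) : Multiset ℕ) = r ::ₘ (X i : Multiset ℕ) := rfl
  rw [hcons] at h2
  rw [hcons2] at h1
  rw [show r :: B i = r :: X i from by rw [hXi]]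
  -- h1 : MB upd + X i = MB X + (r ::ₘ X i) ; h2 : MB X + (r ::ₘ rest) = MB B + rest
  have key : MB (Function.update X i (r :: X i)) + ((X i : Multiset ℕ) + (r ::ₘ (rest : Multiset ℕ)))
      = MB B + ((X i : Multiset ℕ) + (r ::ₘ (rest : Multiset ℕ))) := by
    calc MB (Function.update X i (r :: X i)) + ((X i : Multiset ℕ) + (r ::ₘ (rest : Multiset ℕ)))
        = (MB (Function.update X i (r :: X i)) + (X i : Multiset ℕ)) + (r ::ₘ (rest : Multiset ℕ)) := by abel
      _ = (MB X + (r ::ₘ (X i : Multiset ℕ))) + (r ::ₘ (rest : Multiset ℕ)) := by rw [h1]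
      _ = (MB X + (r ::ₘ (rest : Multiset ℕ))) + (r ::ₘ (X i : Multiset ℕ)) := by abel
      _ = (MB B + (rest : Multiset ℕ)) + (r ::ₘ (X i : Multiset ℕ)) := by rw [h2]
      _ = MB B + ((X i : Multiset ℕ) + (r ::ₘ (rest : Multiset ℕ))) := by
          rw [Multiset.add_cons, Multiset.add_cons, Multiset.add_cons]
          abel
  exact add_right_cancel key

lemma S0col_cons (a : ℕ) (l : List ℕ) :
    S0col (a :: l) = (if l.any (fun b => decide (b < a)) then 1 else 0) + S0col l := rfl

lemma S0_reloc_le {C : ℕ} (B : Bay C) {c i : Fin C} (hic : i ≠ c) {r : ℕ} {rest : List ℕ}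
    (hbc : B c = r :: rest) :
    S0 B ≤ S0 (RelocStep' B c i r rest) + 1 := by
  rw [reloc_eq_update B hic]
  set X := Function.update B c rest with hX
  have h1 : S0 (Function.update X i (r :: X i)) + S0col (X i)
      = S0 X + S0col (r :: X i) := S0_update_add X i (r :: X i)
  have h2 : S0 X + S0col (B c) = S0 B + S0col rest := S0_update_add B c rest
  have hXi : X i = B i := Function.update_of_ne hic rest B
  rw [hbc, S0col_cons] at h2
  rw [S0col_cons] at h1
  have e1 : (if (rest.any fun b => decide (b < r)) = true then 1 else 0) ≤ 1 := by
    split <;> omega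
  have e2 : (0:ℕ) ≤ (if ((X i).any fun b => decide (b < r)) = true then 1 else 0) := by
    omega
  rw [show r :: B i = r :: X i from by rw [hXi]]
  omega

lemma Steps_lower {C P : ℕ} : ∀ {B : Bay C} {n : ℕ}, Steps P B n → S0 B ≤ n := by
  intro B n hs
  induction hs with
  | empty B hB =>
    have : S0 B = 0 := by
      unfold S0
      refine Finset.sum_eq_zero fun i _ => ?_
      rw [hB i]; rfl
    omega
  | retrieve B c t rest n hbc hmin hsteps ih =>
    have h2 : S0 (Function.update B c rest) + S0col (B c) = S0 B + S0col rest :=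
      S0_update_add B c rest
    have hif : (rest.any fun b => decide (b < t)) = false := by
      rw [List.any_eq_false]
      intro b hb
      simp only [decide_eq_true_eq, Nat.not_lt]
      exact hmin b ⟨c, by rw [hbc]; exact List.mem_cons_of_mem _ hb⟩
    rw [hbc, S0col_cons, hif] at h2
    simp only [Bool.false_eq_true, if_false] at h2
    omega
  | relocate B B' n hrel hsteps ih =>
    obtain ⟨c, i, r, t, rest, hic, hbc, htrest, hmin, htr, hlen, hB'⟩ := hrel
    have hB'' : B' = RelocStep' B c i r rest := hB'
    have := S0_reloc_le B hic hbc
    rw [← hB''] at this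
    omega

lemma card_MB {C : ℕ} (B : Bay C) : (MB B).card = ∑ i : Fin C, (B i).length := by
  unfold MB
  induction (Finset.univ : Finset (Fin C)) using Finset.induction_on with
  | empty => simp
  | insert hx ih => simp_all

lemma S0_retrieve_min {C : ℕ} {B : Bay C} {c : Fin C} {t : ℕ} {rest : List ℕ}
    (hbc : B c = t :: rest) (hmin : ∀ x, bayMem x B → t ≤ x) :
    S0 (Function.update B c rest) = S0 B := by
  have h2 : S0 (Function.update B c rest) + S0col (B c) = S0 B + S0col rest :=
    S0_update_add B c rest
  have hif : (rest.any fun b => decide (b < t)) = false := by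
    rw [List.any_eq_false]
    intro b hb
    simp only [decide_eq_true_eq, Nat.not_lt]
    exact hmin b ⟨c, by rw [hbc]; exact List.mem_cons_of_mem _ hb⟩
  rw [hbc, S0col_cons, hif] at h2
  simp only [Bool.false_eq_true, if_false] at h2
  omega

lemma finish {C' P : ℕ} (hP : 0 < P) :
    ∀ (N : ℕ) (D : Bay C'), (MB D).Nodup → (MB D).card ≤ C' →
      (MB D).card + S0 D ≤ N → Steps P D (S0 D) := by
  intro N
  induction N with
  | zero =>
    intro D hnd hcard hN
    have hc0 : (MB D).card = 0 := by omega
    have hMB : MB D = 0 := Multiset.card_eq_zero.mp hc0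
    have hemp : ∀ i, D i = [] := by
      intro i
      by_contra hne
      obtain ⟨a, ha⟩ := List.exists_mem_of_ne_nil _ hne
      have : a ∈ MB D := mem_MB.mpr ⟨i, ha⟩
      rw [hMB] at this
      exact absurd this (Multiset.notMem_zero a)
    have hS : S0 D = 0 := by
      unfold S0
      refine Finset.sum_eq_zero fun i _ => ?_
      rw [hemp i]; rfl
    rw [hS]
    exact Steps.empty D hemp
  | succ N IH =>
    intro D hnd hcard hN
    by_cases hemp : ∀ i, D i = []
    · have hS : S0 D = 0 := by
        unfold S0
        refine Finset.sum_eq_zero fun i _ => ?_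
        rw [hemp i]; rfl
      rw [hS]
      exact Steps.empty D hemp
    · push_neg at hemp
      obtain ⟨i0, hi0⟩ := hemp
      obtain ⟨x0, hx0⟩ := List.exists_mem_of_ne_nil _ hi0
      have hx0' : x0 ∈ MB D := mem_MB.mpr ⟨i0, hx0⟩
      -- the global minimum
      have hex : ∃ x, x ∈ MB D := ⟨x0, hx0'⟩
      set t := Nat.find hex with hT
      have ht : t ∈ MB D := Nat.find_spec hex
      have hmin : ∀ x, bayMem x D → t ≤ x := fun x hx => Nat.find_min' hex (mem_MB.mpr hx)
      obtain ⟨c, htc⟩ : bayMem t D := mem_MB.mp ht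
      cases hDc : D c with
      | nil => rw [hDc] at htc; exact absurd htc List.not_mem_nil
      | cons a l =>
        rw [hDc] at htc
        by_cases hat : a = t
        · -- retrieve
          rw [hat] at hDc
          have hMBeq : MB D = t ::ₘ MB (Function.update D c l) := MB_retrieve hDc
          have hS0eq : S0 (Function.update D c l) = S0 D := S0_retrieve_min hDc hmin
          have hnd' : (MB (Function.update D c l)).Nodup := by
            rw [hMBeq] at hnd
            exact (Multiset.nodup_cons.mp hnd).2
          have hcard' : (MB (Function.update D c l)).card + 1 = (MB D).card := by
            rw [hMBeq]; simp
          have hrec := IH (Function.update D c l) hnd' (by omega) (by omega)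
          rw [hS0eq] at hrec
          exact Steps.retrieve D c t l (S0 D) hDc hmin hrec
        · -- relocate top a to an empty column
          have htl : t ∈ l := by
            rcases List.mem_cons.mp htc with h | h
            · exact absurd h.symm hat
            · exact h
          have hta : t < a :=
            lt_of_le_of_ne (hmin a ⟨c, by rw [hDc]; exact List.mem_cons_self⟩)
              (fun h => hat h.symm)
          -- find empty column ≠ c
          have hcardD : (MB D).card = ∑ i : Fin C', (D i).length := card_MB D
          obtain ⟨i, hic, hiemp⟩ : ∃ i : Fin C', i ≠ c ∧ D i = [] := by
            by_contra hno
            push_neg at hno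
            have hsum : ∑ i : Fin C', (D i).length
                = (D c).length + ∑ i ∈ Finset.univ.erase c, (D i).length :=
              (Finset.add_sum_erase Finset.univ _ (Finset.mem_univ c)).symm
            have hlen2 : 2 ≤ (D c).length := by
              rw [hDc]
              have : l ≠ [] := List.ne_nil_of_mem htl
              cases l with
              | nil => exact absurd rfl this
              | cons b m => simp
            have hone : ∀ i ∈ Finset.univ.erase c, 1 ≤ (D i).length := by
              intro i hi
              have hi' : i ≠ c := Finset.ne_of_mem_erase hi
              have := hno i hi'
              cases hDi : D i with
              | nil => exact absurd hDi this
              | cons b m => simp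
            have hge : (Finset.univ.erase c).card ≤ ∑ i ∈ Finset.univ.erase c, (D i).length := by
              rw [Finset.card_eq_sum_ones]
              exact Finset.sum_le_sum hone
            have hcerase : (Finset.univ.erase c).card = C' - 1 := by
              rw [Finset.card_erase_of_mem (Finset.mem_univ c), Finset.card_univ, Fintype.card_fin]
            have hC1 : 0 < C' := c.pos
            omega
          set D' := RelocStep' D c i a l with hD'
          have hMBeq : MB D' = MB D := MB_reloc D hic hDc
          -- S0 D = S0 D' + 1
          have hS0 : S0 D = S0 D' + 1 := by
            rw [hD', reloc_eq_update D hic]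
            set X := Function.update D c l with hX
            have h1 : S0 (Function.update X i (a :: X i)) + S0col (X i)
                = S0 X + S0col (a :: X i) := S0_update_add X i (a :: X i)
            have h2 : S0 X + S0col (D c) = S0 D + S0col l := S0_update_add D c l
            have hXi : X i = D i := Function.update_of_ne hic l D
            have hany : (l.any fun b => decide (b < a)) = true := by
              rw [List.any_eq_true]
              exact ⟨t, htl, by simp [hta]⟩
            rw [hDc, S0col_cons, hany] at h2
            simp only [if_true] at h2
            rw [hXi, hiemp] at h1
            have hcol1 : S0col (a :: ([] : List ℕ)) = 0 := by simp [S0col]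
            have hcol0 : S0col ([] : List ℕ) = 0 := rfl
            rw [hcol1, hcol0] at h1
            rw [show a :: D i = a :: ([] : List ℕ) from by rw [hiemp]]
            omega
          have hnd' : (MB D').Nodup := by rw [hMBeq]; exact hnd
          have hrec := IH D' hnd' (by rw [hMBeq]; exact hcard)
            (by rw [hMBeq]; omega)
          have hrel : RelocStep P D D' :=
            ⟨c, i, a, t, l, hic, hDc, htl, hmin, hta,
              by rw [hiemp]; exact hP, rfl⟩
          have := Steps.relocate D D' (S0 D') hrel hrec
          rw [hS0]
          exact this

lemma MB_cons {C : ℕ} (col : List ℕ) (B : Bay C) :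
    MB (Fin.cons col B : Bay (C+1)) = (col : Multiset ℕ) + MB B := by
  unfold MB
  rw [Fin.sum_univ_succ]
  simp

lemma S0_cons {C : ℕ} (col : List ℕ) (B : Bay C) :
    S0 (Fin.cons col B : Bay (C+1)) = S0col col + S0 B := by
  unfold S0
  rw [Fin.sum_univ_succ]
  simp

lemma update_cons_succ {C : ℕ} (col : List ℕ) (B : Bay C) (c : Fin C) (l : List ℕ) :
    Function.update (Fin.cons col B : Bay (C+1)) c.succ l
      = Fin.cons col (Function.update B c l) := by
  funext j
  refine Fin.cases ?_ (fun k => ?_) j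
  · rw [Function.update_of_ne (Fin.succ_ne_zero c).symm, Fin.cons_zero, Fin.cons_zero]
  · by_cases hkc : k = c
    · subst hkc
      rw [Function.update_self, Fin.cons_succ, Function.update_self]
    · rw [Function.update_of_ne (fun hh => hkc (Fin.succ_injective _ hh)), Fin.cons_succ,
        Fin.cons_succ, Function.update_of_ne hkc]

lemma reloc_cons_succ {C : ℕ} (col : List ℕ) (B : Bay C) (c i : Fin C) (r : ℕ)
    (rest : List ℕ) :
    Fin.cons col (RelocStep' B c i r rest)
      = RelocStep' (Fin.cons col B : Bay (C+1)) c.succ i.succ r rest := by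
  funext j
  refine Fin.cases ?_ (fun k => ?_) j
  · rw [Fin.cons_zero]
    unfold RelocStep'
    rw [if_neg (Fin.succ_ne_zero c).symm, if_neg (Fin.succ_ne_zero i).symm, Fin.cons_zero]
  · rw [Fin.cons_succ]
    unfold RelocStep'
    by_cases hkc : k = c
    · subst hkc
      rw [if_pos rfl, if_pos rfl]
    · rw [if_neg hkc, if_neg (fun hh => hkc (Fin.succ_injective _ hh))]
      by_cases hki : k = i
      · subst hki
        rw [if_pos rfl, if_pos rfl, Fin.cons_succ]
      · rw [if_neg hki, if_neg (fun hh => hki (Fin.succ_injective _ hh)), Fin.cons_succ]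

lemma card_le_of_Icc {ω L : ℕ} {s : Multiset ℕ} (hnd : s.Nodup)
    (hmem : ∀ x ∈ s, ω ≤ x ∧ x ≤ L) : s.card ≤ L + 1 - ω := by
  have hsub : s.toFinset ⊆ Finset.Icc ω L := by
    intro x hx
    rw [Finset.mem_Icc]
    exact hmem x (Multiset.mem_toFinset.mp hx)
  have := Finset.card_le_card hsub
  rwa [Multiset.toFinset_card_of_nodup hnd, Nat.card_Icc] at this

lemma lift {C P : ℕ} (hP : 0 < P) (ω L : ℕ) (hωL : L + 1 ≤ ω + (C + 1))
    (col : List ℕ) (hcol : ∀ x ∈ col, ω ≤ x ∧ x ≤ L) :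
    ∀ {B : Bay C} {n : ℕ}, Steps P B n →
      (∀ x, bayMem x B → x ≤ L) →
      (MB (Fin.cons col B : Bay (C+1))).Nodup →
      ∃ k, k ≤ n + S0col col ∧ Steps P (Fin.cons col B : Bay (C+1)) k := by
  intro B n hs
  induction hs with
  | empty B hB =>
    intro hub hnd
    have hMBB : MB B = 0 := by
      unfold MB
      refine Finset.sum_eq_zero fun i _ => ?_
      rw [hB i]; rfl
    have hS0B : S0 B = 0 := by
      unfold S0
      refine Finset.sum_eq_zero fun i _ => ?_
      rw [hB i]; rfl
    have hmem : ∀ x ∈ MB (Fin.cons col B : Bay (C+1)), ω ≤ x ∧ x ≤ L := by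
      intro x hx
      rw [MB_cons, hMBB, add_zero, Multiset.mem_coe] at hx
      exact hcol x hx
    have hcard : (MB (Fin.cons col B : Bay (C+1))).card ≤ C + 1 := by
      have := card_le_of_Icc hnd hmem
      omega
    refine ⟨S0 (Fin.cons col B : Bay (C+1)), ?_, ?_⟩
    · rw [S0_cons, hS0B]; omega
    · exact finish hP _ _ hnd hcard le_rfl
  | retrieve B c t rest n hbc hmin hsteps IH =>
    intro hub hnd
    by_cases hcm : ∀ y ∈ col, t ≤ y
    · -- lift the retrieval
      have hMBB : MB B = t ::ₘ MB (Function.update B c rest) := MB_retrieve hbc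
      have hub' : ∀ x, bayMem x (Function.update B c rest) → x ≤ L := by
        intro x hx
        refine hub x (mem_MB.mp ?_)
        rw [hMBB]
        exact Multiset.mem_cons_of_mem (mem_MB.mpr hx)
      have hnd' : (MB (Fin.cons col (Function.update B c rest) : Bay (C+1))).Nodup := by
        have heq : MB (Fin.cons col B : Bay (C+1))
            = t ::ₘ MB (Fin.cons col (Function.update B c rest) : Bay (C+1)) := by
          rw [MB_cons, MB_cons, hMBB, Multiset.add_cons]
        rw [heq] at hnd
        exact (Multiset.nodup_cons.mp hnd).2
      obtain ⟨k, hk, hstep⟩ := IH hub' hnd'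
      refine ⟨k, hk, ?_⟩
      refine Steps.retrieve _ c.succ t rest k ?_ ?_ ?_
      · rw [Fin.cons_succ]; exact hbc
      · intro x hx
        obtain ⟨j, hj⟩ := hx
        refine Fin.cases (fun hj0 => ?_) (fun j' hj' => ?_) j hj
        · rw [Fin.cons_zero] at hj0
          exact hcm x hj0
        · rw [Fin.cons_succ] at hj'
          exact hmin x ⟨j', hj'⟩
      · rw [update_cons_succ]
        exact hstep
    · -- switch to the finishing strategy
      push_neg at hcm
      obtain ⟨y, hy, hyt⟩ := hcm
      have hsB : Steps P B n := Steps.retrieve B c t rest n hbc hmin hsteps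
      have hS0B : S0 B ≤ n := Steps_lower hsB
      have hωy : ω ≤ y := (hcol y hy).1
      have hmem : ∀ x ∈ MB (Fin.cons col B : Bay (C+1)), ω ≤ x ∧ x ≤ L := by
        intro x hx
        rw [MB_cons, Multiset.mem_add] at hx
        rcases hx with hx | hx
        · exact hcol x (Multiset.mem_coe.mp hx)
        · have hxB : bayMem x B := mem_MB.mp hx
          exact ⟨by have := hmin x hxB; omega, hub x hxB⟩
      have hcard : (MB (Fin.cons col B : Bay (C+1))).card ≤ C + 1 := by
        have := card_le_of_Icc hnd hmem
        omega
      refine ⟨S0 (Fin.cons col B : Bay (C+1)), ?_, ?_⟩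
      · rw [S0_cons]; omega
      · exact finish hP _ _ hnd hcard le_rfl
  | relocate B B' n hrel hsteps IH =>
    intro hub hnd
    obtain ⟨c, i, r, t, rest, hic, hbc, htrest, hmin, htr, hlen, hB'⟩ := hrel
    have hB'' : B' = RelocStep' B c i r rest := hB'
    by_cases hcm : ∀ y ∈ col, t ≤ y
    · -- lift the relocation
      have hMBB : MB B' = MB B := by rw [hB'']; exact MB_reloc B hic hbc
      have hub' : ∀ x, bayMem x B' → x ≤ L := by
        intro x hx
        exact hub x (mem_MB.mp (hMBB ▸ mem_MB.mpr hx))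
      have hnd' : (MB (Fin.cons col B' : Bay (C+1))).Nodup := by
        rwa [MB_cons, hMBB, ← MB_cons]
      obtain ⟨k, hk, hstep⟩ := IH hub' hnd'
      refine ⟨k + 1, by omega, ?_⟩
      refine Steps.relocate _ (Fin.cons col B' : Bay (C+1)) k
        ⟨c.succ, i.succ, r, t, rest, ?_, ?_, htrest, ?_, htr, ?_, ?_⟩ hstep
      · exact fun hh => hic (Fin.succ_injective _ hh)
      · rw [Fin.cons_succ]; exact hbc
      · intro x hx
        obtain ⟨j, hj⟩ := hx
        refine Fin.cases (fun hj0 => ?_) (fun j' hj' => ?_) j hj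
        · rw [Fin.cons_zero] at hj0
          exact hcm x hj0
        · rw [Fin.cons_succ] at hj'
          exact hmin x ⟨j', hj'⟩
      · rw [Fin.cons_succ]; exact hlen
      · rw [hB'', reloc_cons_succ]
        rfl
    · -- switch to the finishing strategy
      push_neg at hcm
      obtain ⟨y, hy, hyt⟩ := hcm
      have hsB : Steps P B (n+1) :=
        Steps.relocate B B' n ⟨c, i, r, t, rest, hic, hbc, htrest, hmin, htr, hlen, hB'⟩ hsteps
      have hS0B : S0 B ≤ n + 1 := Steps_lower hsB
      have hωy : ω ≤ y := (hcol y hy).1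
      have hmem : ∀ x ∈ MB (Fin.cons col B : Bay (C+1)), ω ≤ x ∧ x ≤ L := by
        intro x hx
        rw [MB_cons, Multiset.mem_add] at hx
        rcases hx with hx | hx
        · exact hcol x (Multiset.mem_coe.mp hx)
        · have hxB : bayMem x B := mem_MB.mp hx
          exact ⟨by have := hmin x hxB; omega, hub x hxB⟩
      have hcard : (MB (Fin.cons col B : Bay (C+1))).card ≤ C + 1 := by
        have := card_le_of_Icc hnd hmem
        omega
      refine ⟨S0 (Fin.cons col B : Bay (C+1)), ?_, ?_⟩
      · rw [S0_cons]; omega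
      · exact finish hP _ _ hnd hcard le_rfl

lemma MB_eq_flat {C : ℕ} (B : Bay C) :
    MB B = (((List.finRange C).flatMap B : List ℕ) : Multiset ℕ) := by
  have h1 : ∀ l : List (Fin C),
      ((l.flatMap B : List ℕ) : Multiset ℕ) = (l.map (fun i => (B i : Multiset ℕ))).sum := by
    intro l
    induction l with
    | nil => rfl
    | cons a l ih =>
      rw [List.flatMap_cons, List.map_cons, List.sum_cons, ← ih]
      exact Multiset.coe_add _ _
  rw [h1, MB, Finset.sum, Fin.univ_def]
  simp


/-- if `B_{C+1}` consists of a "special" column `col` (all of whose `h`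
containers have labels at least `ω = (h-1)(C+1)+1`) together with a bay `B` of `C`
columns each holding `h` containers, then the optimal number of relocations satisfies
`z_opt(B_{C+1}) ≤ z_opt(B_C) + S0(col)`. -/
theorem stmt19 {C : ℕ} (h P m n : ℕ) (col : List ℕ) (B : Bay C)
    (hh : 1 ≤ h) (hhP : h + 1 ≤ P) (hC : h + 1 ≤ C) (hPC : P ≤ C)
    (hcol : col.length = h) (hω : ∀ x ∈ col, (h - 1) * (C + 1) + 1 ≤ x)
    (hcols : ∀ i, (B i).length = h)
    (hwf : WellFormed P (Fin.cons col B : Bay (C + 1)))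
    (hlabels : ∀ x, bayMem x (Fin.cons col B : Bay (C + 1)) → 1 ≤ x ∧ x ≤ h * (C + 1))
    (hm : IsOptimal P (Fin.cons col B : Bay (C + 1)) m)
    (hn : IsOptimal P B n) :
    m ≤ n + S0col col := by
  set ω := (h - 1) * (C + 1) + 1 with hωdef
  set L := h * (C + 1) with hLdef
  have hP : 0 < P := by omega
  have hωL : L + 1 ≤ ω + (C + 1) := by
    obtain ⟨h', rfl⟩ : ∃ h', h = h' + 1 := ⟨h - 1, by omega⟩
    simp only [hωdef, hLdef, Nat.add_sub_cancel]
    ring_nf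
    omega
  have hcolmem : ∀ x ∈ col, ω ≤ x ∧ x ≤ L := by
    intro x hx
    refine ⟨hω x hx, (hlabels x ⟨0, by rw [Fin.cons_zero]; exact hx⟩).2⟩
  have hub : ∀ x, bayMem x B → x ≤ L := by
    intro x ⟨i, hi⟩
    exact (hlabels x ⟨i.succ, by rw [Fin.cons_succ]; exact hi⟩).2
  have hnd : (MB (Fin.cons col B : Bay (C+1))).Nodup := by
    rw [MB_eq_flat]
    exact Multiset.coe_nodup.mpr hwf.2
  obtain ⟨k, hk, hstep⟩ := lift hP ω L hωL col hcolmem hn.1 hub hnd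
  exact le_trans (hm.2 k hstep) hk
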